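/- Let G be a finite two-player zero-sum game with value v, and let p* = max over (a₁,a₂) of u(a₁,a₂) and p† = min over (a₁,a₂) of u(a₁,a₂). For every ε ∈ (0,1] and every n ≥ 1, the strategy profile in which both players play fixed minimax strategies in the first ⌊n(1-ε)⌋ stages and alternate between fixed pure action profiles a* (achieving p*) and a† (achieving p†) in the remaining ⌈nε⌉ stages is a (c·(⌈nε⌉+1)/n)-Nash equilibrium of the n-stage repeated game of G, where c = (p* - p†)/2. -/

import Mathlib

/-- A mixed strategy over a finite action set. -/
def IsMixed {α : Type} [Fintype α] (σ : α → ℝ) : Prop :=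
  (∀ a, 0 ≤ σ a) ∧ ∑ a, σ a = 1

/-- The pure (point-mass) strategy on action `a`. -/
def pureS {α : Type} [DecidableEq α] (a : α) : α → ℝ := fun b => if b = a then 1 else 0

/-- Expected payoff in a two-player game under a mixed strategy profile. -/
def expU2 {A1 A2 : Type} [Fintype A1] [Fintype A2] (u : A1 → A2 → ℝ)
    (σ₁ : A1 → ℝ) (σ₂ : A2 → ℝ) : ℝ :=
  ∑ a, ∑ b, σ₁ a * σ₂ b * u a b

/-- Nash equilibrium of the two-player game with payoffs `u1` (row) and `u2` (column). -/
def IsNash2 {A1 A2 : Type} [Fintype A1] [Fintype A2] (u1 u2 : A1 → A2 → ℝ)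
    (σ₁ : A1 → ℝ) (σ₂ : A2 → ℝ) : Prop :=
  IsMixed σ₁ ∧ IsMixed σ₂ ∧
  (∀ τ, IsMixed τ → expU2 u1 τ σ₂ ≤ expU2 u1 σ₁ σ₂) ∧
  (∀ τ, IsMixed τ → expU2 u2 σ₁ τ ≤ expU2 u2 σ₁ σ₂)

/-- `v` is the minmax payoff of the row player: the least payoff the column player can
force on the row player (who best-responds with a pure action). -/
def RowMinmax {A1 A2 : Type} [Fintype A1] [Fintype A2] [Nonempty A1]
    (u1 : A1 → A2 → ℝ) (v : ℝ) : Prop :=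
  IsLeast {x : ℝ | ∃ σ₂ : A2 → ℝ, IsMixed σ₂ ∧
    x = Finset.univ.sup' Finset.univ_nonempty (fun a₁ : A1 => ∑ b, σ₂ b * u1 a₁ b)} v

/-- `v` is the minmax payoff of the column player. -/
def ColMinmax {A1 A2 : Type} [Fintype A1] [Fintype A2] [Nonempty A2]
    (u2 : A1 → A2 → ℝ) (v : ℝ) : Prop :=
  IsLeast {x : ℝ | ∃ σ₁ : A1 → ℝ, IsMixed σ₁ ∧
    x = Finset.univ.sup' Finset.univ_nonempty (fun a₂ : A2 => ∑ a, σ₁ a * u2 a a₂)} v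

/-- Probability that, starting from history `h`, play under the behavioral profile
`(σ₁, σ₂)` follows exactly the sequence of action profiles `l`. -/
def hp2 {A1 A2 : Type} (σ₁ : List (A1 × A2) → A1 → ℝ) (σ₂ : List (A1 × A2) → A2 → ℝ) :
    List (A1 × A2) → List (A1 × A2) → ℝ
  | _, [] => 1
  | h, a :: rest => σ₁ h a.1 * σ₂ h a.2 * hp2 σ₁ σ₂ (h ++ [a]) rest

/-- Expected average payoff (with stage payoff `u`) in the `n`-stage repeated game. -/
noncomputable def avgPay2 {A1 A2 : Type} [Fintype A1] [Fintype A2] (n : ℕ)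
    (u : A1 → A2 → ℝ) (σ₁ : List (A1 × A2) → A1 → ℝ) (σ₂ : List (A1 × A2) → A2 → ℝ) : ℝ :=
  ∑ f : Fin n → A1 × A2, hp2 σ₁ σ₂ [] (List.ofFn f) * ((∑ t, u (f t).1 (f t).2) / n)

/-- ε-Nash equilibrium of the `n`-stage repeated two-player game with stage payoffs
`u1` (row) and `u2` (column), behavioral strategies and average payoffs. -/
def IsEpsRepNash2 {A1 A2 : Type} [Fintype A1] [Fintype A2] (n : ℕ) (ε : ℝ)
    (u1 u2 : A1 → A2 → ℝ)
    (σ₁ : List (A1 × A2) → A1 → ℝ) (σ₂ : List (A1 × A2) → A2 → ℝ) : Prop :=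
  (∀ h, IsMixed (σ₁ h)) ∧ (∀ h, IsMixed (σ₂ h)) ∧
  (∀ τ, (∀ h, IsMixed (τ h)) → avgPay2 n u1 τ σ₂ ≤ avgPay2 n u1 σ₁ σ₂ + ε) ∧
  (∀ τ, (∀ h, IsMixed (τ h)) → avgPay2 n u2 σ₁ τ ≤ avgPay2 n u2 σ₁ σ₂ + ε)

/-- Nash equilibrium of the `n`-stage repeated two-player game. -/
def IsRepNash2 {A1 A2 : Type} [Fintype A1] [Fintype A2] (n : ℕ)
    (u1 u2 : A1 → A2 → ℝ)
    (σ₁ : List (A1 × A2) → A1 → ℝ) (σ₂ : List (A1 × A2) → A2 → ℝ) : Prop :=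
  (∀ h, IsMixed (σ₁ h)) ∧ (∀ h, IsMixed (σ₂ h)) ∧
  (∀ τ, (∀ h, IsMixed (τ h)) → avgPay2 n u1 τ σ₂ ≤ avgPay2 n u1 σ₁ σ₂) ∧
  (∀ τ, (∀ h, IsMixed (τ h)) → avgPay2 n u2 σ₁ τ ≤ avgPay2 n u2 σ₁ σ₂)

/-- Shannon entropy (base 2) of a mixed strategy, with the convention 0·log 0 = 0. -/
noncomputable def ent {α : Type} [Fintype α] (σ : α → ℝ) : ℝ :=
  ∑ a, -(σ a * Real.logb 2 (σ a))

/-- Shannon entropy of a behavioral strategy in the `n`-stage repeated two-player game: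
the maximum over terminal histories of the summed stage entropies along the prefixes. -/
noncomputable def repEnt2 {A1 A2 α : Type} [Fintype A1] [Fintype A2] [Fintype α]
    [Nonempty A1] [Nonempty A2] (n : ℕ) (σ : List (A1 × A2) → α → ℝ) : ℝ :=
  Finset.univ.sup' Finset.univ_nonempty
    (fun f : Fin n → A1 × A2 => ∑ t : Fin n, ent (σ ((List.ofFn f).take t)))

section Aux
variable {A1 A2 : Type} [Fintype A1] [Fintype A2]

noncomputable def EP (u : A1 → A2 → ℝ) (σ₁ : List (A1 × A2) → A1 → ℝ)
    (σ₂ : List (A1 × A2) → A2 → ℝ) (h : List (A1 × A2)) (n : ℕ) : ℝ :=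
  ∑ f : Fin n → A1 × A2, hp2 σ₁ σ₂ h (List.ofFn f) * (∑ t, u (f t).1 (f t).2)

noncomputable def stagePay (u : A1 → A2 → ℝ) (σ₁ : List (A1 × A2) → A1 → ℝ)
    (σ₂ : List (A1 × A2) → A2 → ℝ) (h : List (A1 × A2)) : ℝ :=
  ∑ a : A1 × A2, σ₁ h a.1 * σ₂ h a.2 * u a.1 a.2

lemma weight_sum {σ₁ : List (A1 × A2) → A1 → ℝ} {σ₂ : List (A1 × A2) → A2 → ℝ}
    (h : List (A1 × A2)) (h1 : IsMixed (σ₁ h)) (h2 : IsMixed (σ₂ h)) :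
    ∑ a : A1 × A2, σ₁ h a.1 * σ₂ h a.2 = 1 := by
  rw [Fintype.sum_prod_type, ← Finset.sum_mul_sum, h1.2, h2.2, mul_one]

lemma sum_fn_succ {A : Type} [Fintype A] {n : ℕ} (F : (Fin (n+1) → A) → ℝ) :
    ∑ f : Fin (n+1) → A, F f = ∑ a : A, ∑ g : Fin n → A, F (Fin.cons a g) := by
  rw [← (Fin.consEquiv (fun _ : Fin (n+1) => A)).sum_comp F, Fintype.sum_prod_type]
  rfl

lemma ofFn_cons {A : Type} {n : ℕ} (a : A) (g : Fin n → A) :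
    List.ofFn (Fin.cons a g) = a :: List.ofFn g := by
  simp [List.ofFn_succ]

lemma hp2_cons (σ₁ : List (A1 × A2) → A1 → ℝ) (σ₂ : List (A1 × A2) → A2 → ℝ)
    (h : List (A1 × A2)) (a : A1 × A2) (l : List (A1 × A2)) :
    hp2 σ₁ σ₂ h (a :: l) = σ₁ h a.1 * σ₂ h a.2 * hp2 σ₁ σ₂ (h ++ [a]) l := rfl

lemma hp2_sum {σ₁ : List (A1 × A2) → A1 → ℝ} {σ₂ : List (A1 × A2) → A2 → ℝ}
    (hm1 : ∀ h, IsMixed (σ₁ h)) (hm2 : ∀ h, IsMixed (σ₂ h)) :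
    ∀ (n : ℕ) (h : List (A1 × A2)), ∑ f : Fin n → A1 × A2, hp2 σ₁ σ₂ h (List.ofFn f) = 1
  | 0, h => by simp [hp2]
  | n+1, h => by
    rw [sum_fn_succ (fun f => hp2 σ₁ σ₂ h (List.ofFn f))]
    simp only [ofFn_cons, hp2_cons]
    have : ∀ a : A1 × A2, ∑ g : Fin n → A1 × A2,
        σ₁ h a.1 * σ₂ h a.2 * hp2 σ₁ σ₂ (h ++ [a]) (List.ofFn g)
        = σ₁ h a.1 * σ₂ h a.2 := by
      intro a
      rw [← Finset.mul_sum, hp2_sum hm1 hm2 n (h ++ [a]), mul_one]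
    rw [Finset.sum_congr rfl (fun a _ => this a), weight_sum h (hm1 h) (hm2 h)]

lemma EP_succ {σ₁ : List (A1 × A2) → A1 → ℝ} {σ₂ : List (A1 × A2) → A2 → ℝ}
    (hm1 : ∀ h, IsMixed (σ₁ h)) (hm2 : ∀ h, IsMixed (σ₂ h)) (u : A1 → A2 → ℝ)
    (n : ℕ) (h : List (A1 × A2)) :
    EP u σ₁ σ₂ h (n+1)
      = ∑ a : A1 × A2, σ₁ h a.1 * σ₂ h a.2 * (u a.1 a.2 + EP u σ₁ σ₂ (h ++ [a]) n) := by
  unfold EP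
  rw [sum_fn_succ (fun f => hp2 σ₁ σ₂ h (List.ofFn f) * ∑ t, u (f t).1 (f t).2)]
  refine Finset.sum_congr rfl (fun a _ => ?_)
  have : ∀ g : Fin n → A1 × A2,
      hp2 σ₁ σ₂ h (List.ofFn (Fin.cons a g : Fin (n+1) → A1 × A2)) * ∑ t : Fin (n+1), u ((Fin.cons a g : Fin (n+1) → A1 × A2) t).1 ((Fin.cons a g : Fin (n+1) → A1 × A2) t).2
      = σ₁ h a.1 * σ₂ h a.2 * (hp2 σ₁ σ₂ (h ++ [a]) (List.ofFn g) * (u a.1 a.2 + ∑ t : Fin n, u (g t).1 (g t).2)) := by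
    intro g
    rw [ofFn_cons, hp2_cons, Fin.sum_univ_succ]
    simp [Fin.cons_succ]
    ring
  rw [Finset.sum_congr rfl (fun g _ => this g), ← Finset.mul_sum]
  congr 1
  simp only [mul_add]
  rw [Finset.sum_add_distrib, ← Finset.sum_mul, hp2_sum hm1 hm2 n (h ++ [a]), one_mul]

lemma EP_le {σ₁ : List (A1 × A2) → A1 → ℝ} {σ₂ : List (A1 × A2) → A2 → ℝ}
    (hm1 : ∀ h, IsMixed (σ₁ h)) (hm2 : ∀ h, IsMixed (σ₂ h)) (u : A1 → A2 → ℝ)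
    (B : ℕ → ℝ) (hB : ∀ h, stagePay u σ₁ σ₂ h ≤ B h.length) :
    ∀ (n : ℕ) (h : List (A1 × A2)),
      EP u σ₁ σ₂ h n ≤ ∑ i ∈ Finset.range n, B (h.length + i)
  | 0, h => by simp [EP]
  | n+1, h => by
    rw [EP_succ hm1 hm2]
    have key : ∀ a : A1 × A2,
        σ₁ h a.1 * σ₂ h a.2 * (u a.1 a.2 + EP u σ₁ σ₂ (h ++ [a]) n)
        ≤ σ₁ h a.1 * σ₂ h a.2 * (u a.1 a.2 + ∑ i ∈ Finset.range n, B (h.length + 1 + i)) := by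
      intro a
      have hlen : (h ++ [a]).length = h.length + 1 := by simp
      have := EP_le hm1 hm2 u B hB n (h ++ [a])
      rw [hlen] at this
      exact mul_le_mul_of_nonneg_left (add_le_add_right this _)
        (mul_nonneg ((hm1 h).1 _) ((hm2 h).1 _))
    calc ∑ a : A1 × A2, σ₁ h a.1 * σ₂ h a.2 * (u a.1 a.2 + EP u σ₁ σ₂ (h ++ [a]) n)
        ≤ ∑ a : A1 × A2, σ₁ h a.1 * σ₂ h a.2 * (u a.1 a.2 + ∑ i ∈ Finset.range n, B (h.length + 1 + i)) :=
          Finset.sum_le_sum (fun a _ => key a)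
      _ = stagePay u σ₁ σ₂ h + ∑ i ∈ Finset.range n, B (h.length + 1 + i) := by
          simp only [mul_add]
          rw [Finset.sum_add_distrib, ← Finset.sum_mul, weight_sum h (hm1 h) (hm2 h), one_mul]
          rfl
      _ ≤ B h.length + ∑ i ∈ Finset.range n, B (h.length + 1 + i) :=
          add_le_add_left (hB h) _
      _ = ∑ i ∈ Finset.range (n+1), B (h.length + i) := by
          rw [Finset.sum_range_succ']
          simp only [Nat.add_zero]
          rw [add_comm]
          congr 1
          exact Finset.sum_congr rfl (fun i _ => by ring_nf)

lemma EP_eq {σ₁ : List (A1 × A2) → A1 → ℝ} {σ₂ : List (A1 × A2) → A2 → ℝ}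
    (hm1 : ∀ h, IsMixed (σ₁ h)) (hm2 : ∀ h, IsMixed (σ₂ h)) (u : A1 → A2 → ℝ)
    (g : ℕ → ℝ) (hg : ∀ h, stagePay u σ₁ σ₂ h = g h.length) :
    ∀ (n : ℕ) (h : List (A1 × A2)),
      EP u σ₁ σ₂ h n = ∑ i ∈ Finset.range n, g (h.length + i)
  | 0, h => by simp [EP]
  | n+1, h => by
    rw [EP_succ hm1 hm2]
    have key : ∀ a : A1 × A2,
        σ₁ h a.1 * σ₂ h a.2 * (u a.1 a.2 + EP u σ₁ σ₂ (h ++ [a]) n)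
        = σ₁ h a.1 * σ₂ h a.2 * (u a.1 a.2 + ∑ i ∈ Finset.range n, g (h.length + 1 + i)) := by
      intro a
      have hlen : (h ++ [a]).length = h.length + 1 := by simp
      have := EP_eq hm1 hm2 u g hg n (h ++ [a])
      rw [hlen] at this
      rw [this]
    calc ∑ a : A1 × A2, σ₁ h a.1 * σ₂ h a.2 * (u a.1 a.2 + EP u σ₁ σ₂ (h ++ [a]) n)
        = ∑ a : A1 × A2, σ₁ h a.1 * σ₂ h a.2 * (u a.1 a.2 + ∑ i ∈ Finset.range n, g (h.length + 1 + i)) :=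
          Finset.sum_congr rfl (fun a _ => key a)
      _ = stagePay u σ₁ σ₂ h + ∑ i ∈ Finset.range n, g (h.length + 1 + i) := by
          simp only [mul_add]
          rw [Finset.sum_add_distrib, ← Finset.sum_mul, weight_sum h (hm1 h) (hm2 h), one_mul]
          rfl
      _ = ∑ i ∈ Finset.range (n+1), g (h.length + i) := by
          rw [hg h, Finset.sum_range_succ']
          simp only [Nat.add_zero]
          rw [add_comm]
          congr 1
          exact Finset.sum_congr rfl (fun i _ => by ring_nf)

lemma avgPay2_eq_EP (n : ℕ) (u : A1 → A2 → ℝ) (σ₁ : List (A1 × A2) → A1 → ℝ)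
    (σ₂ : List (A1 × A2) → A2 → ℝ) :
    avgPay2 n u σ₁ σ₂ = EP u σ₁ σ₂ [] n / n := by
  unfold avgPay2 EP
  rw [Finset.sum_div]
  exact Finset.sum_congr rfl (fun f _ => by rw [mul_div_assoc])

lemma sum_mixed_le {τ : A1 → ℝ} (hτ : IsMixed τ) {f : A1 → ℝ} {c : ℝ}
    (hf : ∀ a, f a ≤ c) : ∑ a, τ a * f a ≤ c := by
  calc ∑ a, τ a * f a ≤ ∑ a, τ a * c :=
        Finset.sum_le_sum (fun a _ => mul_le_mul_of_nonneg_left (hf a) (hτ.1 a))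
    _ = c := by rw [← Finset.sum_mul, hτ.2, one_mul]

lemma sum_mixed_ge {τ : A1 → ℝ} (hτ : IsMixed τ) {f : A1 → ℝ} {c : ℝ}
    (hf : ∀ a, c ≤ f a) : c ≤ ∑ a, τ a * f a := by
  calc c = ∑ a, τ a * c := by rw [← Finset.sum_mul, hτ.2, one_mul]
    _ ≤ ∑ a, τ a * f a :=
        Finset.sum_le_sum (fun a _ => mul_le_mul_of_nonneg_left (hf a) (hτ.1 a))

lemma sum_prod_factor (τ1 : A1 → ℝ) (s2 : A2 → ℝ) (u : A1 → A2 → ℝ) :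
    ∑ a : A1 × A2, τ1 a.1 * s2 a.2 * u a.1 a.2 = ∑ a1, τ1 a1 * ∑ a2, s2 a2 * u a1 a2 := by
  rw [Fintype.sum_prod_type]
  exact Finset.sum_congr rfl (fun a1 _ => by
    rw [Finset.mul_sum]
    exact Finset.sum_congr rfl (fun a2 _ => by ring))

lemma sum_prod_factor' (s1 : A1 → ℝ) (τ2 : A2 → ℝ) (u : A1 → A2 → ℝ) :
    ∑ a : A1 × A2, s1 a.1 * τ2 a.2 * u a.1 a.2 = ∑ a2, τ2 a2 * ∑ a1, s1 a1 * u a1 a2 := by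
  rw [Fintype.sum_prod_type_right]
  exact Finset.sum_congr rfl (fun a2 _ => by
    rw [Finset.mul_sum]
    exact Finset.sum_congr rfl (fun a1 _ => by ring))

lemma pureS_mixed {α : Type} [Fintype α] [DecidableEq α] (a : α) : IsMixed (pureS a) := by
  constructor
  · intro b; unfold pureS; split <;> norm_num
  · simp [pureS]

lemma sum_pure_inner {α : Type} [Fintype α] [DecidableEq α] (a0 : α) (f : α → ℝ) :
    ∑ a, pureS a0 a * f a = f a0 := by
  simp [pureS]

lemma parity_sum_odd (q : ℝ) : ∀ r : ℕ,
    ∑ i ∈ Finset.range r, (if i % 2 = 0 then (0:ℝ) else q) = (r/2 : ℕ) * q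
  | 0 => by simp
  | r+1 => by
    rw [Finset.sum_range_succ, parity_sum_odd q r]
    rcases Nat.even_or_odd r with he | ho
    · have h1 : r % 2 = 0 := Nat.even_iff.mp he
      have h2 : (r+1)/2 = r/2 := by omega
      simp [h1, h2]
    · have h1 : r % 2 = 1 := Nat.odd_iff.mp ho
      have h2 : (r+1)/2 = r/2 + 1 := by omega
      rw [h1, h2]
      push_cast
      ring_nf

lemma parity_sum_even (q : ℝ) : ∀ r : ℕ,
    ∑ i ∈ Finset.range r, (if i % 2 = 0 then q else (0:ℝ)) = ((r+1)/2 : ℕ) * q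
  | 0 => by simp
  | r+1 => by
    rw [Finset.sum_range_succ, parity_sum_even q r]
    rcases Nat.even_or_odd r with he | ho
    · have h1 : r % 2 = 0 := Nat.even_iff.mp he
      have h2 : (r+1+1)/2 = (r+1)/2 + 1 := by omega
      rw [h1, h2]
      push_cast
      ring_nf
    · have h1 : r % 2 = 1 := Nat.odd_iff.mp ho
      have h2 : (r+1+1)/2 = (r+1)/2 := by omega
      simp [h1, h2]

lemma sum_pure_pure [DecidableEq A1] [DecidableEq A2] (w : A1 → A2 → ℝ) (x : A1 × A2) :
    ∑ a : A1 × A2, pureS x.1 a.1 * pureS x.2 a.2 * w a.1 a.2 = w x.1 x.2 := by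
  rw [sum_prod_factor]
  rw [sum_pure_inner x.1 (fun a1 => ∑ a2, pureS x.2 a2 * w a1 a2)]
  rw [sum_pure_inner x.2 (fun a2 => w x.1 a2)]

end Aux

theorem stmt_14 {A1 A2 : Type} [Fintype A1] [Fintype A2] [Nonempty A1] [Nonempty A2]
    [DecidableEq A1] [DecidableEq A2]
    (u : A1 → A2 → ℝ) (v : ℝ)
    -- μ₁ and μ₂ are minimax (optimal) strategies guaranteeing the value v
    (μ₁ : A1 → ℝ) (μ₂ : A2 → ℝ)
    (hμ₁ : IsMixed μ₁ ∧ ∀ b, v ≤ ∑ a, μ₁ a * u a b)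
    (hμ₂ : IsMixed μ₂ ∧ ∀ a, ∑ b, μ₂ b * u a b ≤ v)
    -- a* attains the maximal payoff p*, a† attains the minimal payoff p†
    (astar adag : A1 × A2)
    (hstar : ∀ a b, u a b ≤ u astar.1 astar.2)
    (hdag : ∀ a b, u adag.1 adag.2 ≤ u a b)
    (ε : ℝ) (hε0 : 0 < ε) (hε1 : ε ≤ 1) (n : ℕ) (hn : 1 ≤ n) :
    IsEpsRepNash2 n
      ((u astar.1 astar.2 - u adag.1 adag.2) / 2 * ((⌈(n : ℝ) * ε⌉₊ + 1) / n))
      u (fun a b => -(u a b))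
      (fun h => if h.length < ⌊(n : ℝ) * (1 - ε)⌋₊ then μ₁
        else if (h.length - ⌊(n : ℝ) * (1 - ε)⌋₊) % 2 = 0 then pureS astar.1
        else pureS adag.1)
      (fun h => if h.length < ⌊(n : ℝ) * (1 - ε)⌋₊ then μ₂
        else if (h.length - ⌊(n : ℝ) * (1 - ε)⌋₊) % 2 = 0 then pureS astar.2
        else pureS adag.2) := by
  obtain ⟨hμ₁m, hμ₁v⟩ := hμ₁
  obtain ⟨hμ₂m, hμ₂v⟩ := hμ₂
  set m := ⌊(n : ℝ) * (1 - ε)⌋₊ with hmdef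
  set K := ⌈(n : ℝ) * ε⌉₊ with hKdef
  set p1 := u astar.1 astar.2 with hp1
  set p0 := u adag.1 adag.2 with hp0
  have hq : 0 ≤ p1 - p0 := sub_nonneg.mpr (hdag astar.1 astar.2)
  set σ1 := (fun h : List (A1 × A2) => if h.length < m then μ₁
      else if (h.length - m) % 2 = 0 then pureS astar.1 else pureS adag.1) with hs1
  set σ2 := (fun h : List (A1 × A2) => if h.length < m then μ₂
      else if (h.length - m) % 2 = 0 then pureS astar.2 else pureS adag.2) with hs2
  set u2 := (fun (a : A1) (b : A2) => -(u a b)) with hu2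
  have hσ1m : ∀ h, IsMixed (σ1 h) := by
    intro h; rw [hs1]; dsimp only
    split_ifs
    · exact hμ₁m
    · exact pureS_mixed _
    · exact pureS_mixed _
  have hσ2m : ∀ h, IsMixed (σ2 h) := by
    intro h; rw [hs2]; dsimp only
    split_ifs
    · exact hμ₂m
    · exact pureS_mixed _
    · exact pureS_mixed _
  have e1a : ∀ h : List (A1 × A2), h.length < m → σ1 h = μ₁ := by
    intro h hl; rw [hs1]; simp [hl]
  have e1b : ∀ h : List (A1 × A2), ¬h.length < m → (h.length - m) % 2 = 0 →
      σ1 h = pureS astar.1 := by intro h hl hp; rw [hs1]; simp [hl, hp]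
  have e1c : ∀ h : List (A1 × A2), ¬h.length < m → ¬(h.length - m) % 2 = 0 →
      σ1 h = pureS adag.1 := by intro h hl hp; rw [hs1]; simp [hl, hp]
  have e2a : ∀ h : List (A1 × A2), h.length < m → σ2 h = μ₂ := by
    intro h hl; rw [hs2]; simp [hl]
  have e2b : ∀ h : List (A1 × A2), ¬h.length < m → (h.length - m) % 2 = 0 →
      σ2 h = pureS astar.2 := by intro h hl hp; rw [hs2]; simp [hl, hp]
  have e2c : ∀ h : List (A1 × A2), ¬h.length < m → ¬(h.length - m) % 2 = 0 →
      σ2 h = pureS adag.2 := by intro h hl hp; rw [hs2]; simp [hl, hp]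
  have hv_eq : ∑ a : A1 × A2, μ₁ a.1 * μ₂ a.2 * u a.1 a.2 = v := by
    apply le_antisymm
    · rw [sum_prod_factor]; exact sum_mixed_le hμ₁m hμ₂v
    · rw [sum_prod_factor']; exact sum_mixed_ge hμ₂m hμ₁v
  have hneg : ∀ (s1 : A1 → ℝ) (s2 : A2 → ℝ),
      ∑ a : A1 × A2, s1 a.1 * s2 a.2 * u2 a.1 a.2
        = -∑ a : A1 × A2, s1 a.1 * s2 a.2 * u a.1 a.2 := by
    intro s1 s2; rw [hu2]; simp [mul_neg]
  -- exact stage payoffs of the equilibrium profile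
  have stage_eq1 : ∀ h : List (A1 × A2), stagePay u σ1 σ2 h
      = if h.length < m then v else if (h.length - m) % 2 = 0 then p1 else p0 := by
    intro h
    by_cases hl : h.length < m
    · rw [if_pos hl]; unfold stagePay; rw [e1a h hl, e2a h hl]; exact hv_eq
    · rw [if_neg hl]
      by_cases hp : (h.length - m) % 2 = 0
      · rw [if_pos hp]; unfold stagePay; rw [e1b h hl hp, e2b h hl hp]
        exact sum_pure_pure u astar
      · rw [if_neg hp]; unfold stagePay; rw [e1c h hl hp, e2c h hl hp]
        exact sum_pure_pure u adag
  have stage_eq2 : ∀ h : List (A1 × A2), stagePay u2 σ1 σ2 h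
      = if h.length < m then -v else if (h.length - m) % 2 = 0 then -p1 else -p0 := by
    intro h
    by_cases hl : h.length < m
    · rw [if_pos hl]; unfold stagePay
      rw [e1a h hl, e2a h hl, hneg, hv_eq]
    · rw [if_neg hl]
      by_cases hp : (h.length - m) % 2 = 0
      · rw [if_pos hp]; unfold stagePay; rw [e1b h hl hp, e2b h hl hp, hneg]
        rw [sum_pure_pure u astar]
      · rw [if_neg hp]; unfold stagePay; rw [e1c h hl hp, e2c h hl hp, hneg]
        rw [sum_pure_pure u adag]
  have hnpos : (0:ℝ) < n := by exact_mod_cast hn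
  have hmn : m ≤ n := by
    have h1 : (n:ℝ) * (1 - ε) ≤ (n:ℝ) := by nlinarith [Nat.cast_nonneg (α := ℝ) n]
    calc m ≤ ⌊(n:ℝ)⌋₊ := Nat.floor_mono h1
      _ = n := Nat.floor_natCast n
  have hr : n - m ≤ K := by
    by_cases hc : n ≤ K
    · omega
    · push_neg at hc
      have h1 : (n:ℝ) * ε ≤ (K:ℝ) := Nat.le_ceil _
      have h2 : ((n - K : ℕ) : ℝ) = (n:ℝ) - (K:ℝ) := by
        push_cast [Nat.cast_sub (le_of_lt hc)]; ring
      have hk : ((n - K : ℕ) : ℝ) ≤ (n:ℝ) * (1 - ε) := by rw [h2]; nlinarith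
      have := Nat.le_floor hk
      omega
  -- sum computations
  have hsum1 : ∑ i ∈ Finset.range n, (if i < m then v else p1)
      - ∑ i ∈ Finset.range n, (if i < m then v else if (i - m) % 2 = 0 then p1 else p0)
      = (((n - m)/2 : ℕ) : ℝ) * (p1 - p0) := by
    rw [← Finset.sum_sub_distrib]
    have hterm : ∀ i : ℕ, (if i < m then v else p1)
        - (if i < m then v else if (i - m) % 2 = 0 then p1 else p0)
        = if i < m then 0 else if (i - m) % 2 = 0 then 0 else (p1 - p0) := by
      intro i; split_ifs <;> ring
    rw [Finset.sum_congr rfl (fun i _ => hterm i)]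
    rw [Finset.range_eq_Ico, ← Finset.sum_Ico_consecutive _ (Nat.zero_le m) hmn]
    have h0 : ∑ i ∈ Finset.Ico 0 m,
        (if i < m then (0:ℝ) else if (i - m) % 2 = 0 then 0 else (p1 - p0)) = 0 :=
      Finset.sum_eq_zero (fun i hi => by rw [if_pos (Finset.mem_Ico.mp hi).2])
    rw [h0, zero_add, Finset.sum_Ico_eq_sum_range]
    have h1 : ∀ i : ℕ, (if m + i < m then (0:ℝ) else if (m + i - m) % 2 = 0 then 0 else (p1 - p0))
        = if i % 2 = 0 then 0 else (p1 - p0) := by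
      intro i
      have hx : ¬ m + i < m := by omega
      have hy : m + i - m = i := by omega
      rw [if_neg hx, hy]
    rw [Finset.sum_congr rfl (fun i _ => h1 i), parity_sum_odd]
  have hsum2 : ∑ i ∈ Finset.range n, (if i < m then -v else -p0)
      - ∑ i ∈ Finset.range n, (if i < m then -v else if (i - m) % 2 = 0 then -p1 else -p0)
      = (((n - m + 1)/2 : ℕ) : ℝ) * (p1 - p0) := by
    rw [← Finset.sum_sub_distrib]
    have hterm : ∀ i : ℕ, (if i < m then -v else -p0)
        - (if i < m then -v else if (i - m) % 2 = 0 then -p1 else -p0)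
        = if i < m then 0 else if (i - m) % 2 = 0 then (p1 - p0) else 0 := by
      intro i; split_ifs <;> ring
    rw [Finset.sum_congr rfl (fun i _ => hterm i)]
    rw [Finset.range_eq_Ico, ← Finset.sum_Ico_consecutive _ (Nat.zero_le m) hmn]
    have h0 : ∑ i ∈ Finset.Ico 0 m,
        (if i < m then (0:ℝ) else if (i - m) % 2 = 0 then (p1 - p0) else 0) = 0 :=
      Finset.sum_eq_zero (fun i hi => by rw [if_pos (Finset.mem_Ico.mp hi).2])
    rw [h0, zero_add, Finset.sum_Ico_eq_sum_range]
    have h1 : ∀ i : ℕ, (if m + i < m then (0:ℝ) else if (m + i - m) % 2 = 0 then (p1 - p0) else 0)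
        = if i % 2 = 0 then (p1 - p0) else 0 := by
      intro i
      have hx : ¬ m + i < m := by omega
      have hy : m + i - m = i := by omega
      rw [if_neg hx, hy]
    rw [Finset.sum_congr rfl (fun i _ => h1 i), parity_sum_even]
  have hcast1 : (((n - m)/2 : ℕ) : ℝ) * (p1 - p0) ≤ (p1 - p0)/2 * ((K:ℝ) + 1) := by
    have a2 : ((n - m : ℕ) : ℝ) ≤ (K:ℝ) := by exact_mod_cast hr
    have a3 : (((n - m)/2 : ℕ) : ℝ) ≤ ((K:ℝ) + 1)/2 := by
      calc (((n - m)/2 : ℕ) : ℝ) ≤ ((n - m : ℕ) : ℝ)/2 := by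
            exact_mod_cast Nat.cast_div_le
        _ ≤ ((K:ℝ) + 1)/2 := by linarith
    calc (((n - m)/2 : ℕ) : ℝ) * (p1 - p0) ≤ ((K:ℝ) + 1)/2 * (p1 - p0) :=
          mul_le_mul_of_nonneg_right a3 hq
      _ = (p1 - p0)/2 * ((K:ℝ) + 1) := by ring
  have hcast2 : (((n - m + 1)/2 : ℕ) : ℝ) * (p1 - p0) ≤ (p1 - p0)/2 * ((K:ℝ) + 1) := by
    have a2 : ((n - m + 1 : ℕ) : ℝ) ≤ (K:ℝ) + 1 := by
      have : (n - m + 1 : ℕ) ≤ K + 1 := by omega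
      exact_mod_cast this
    have a3 : (((n - m + 1)/2 : ℕ) : ℝ) ≤ ((K:ℝ) + 1)/2 := by
      calc (((n - m + 1)/2 : ℕ) : ℝ) ≤ ((n - m + 1 : ℕ) : ℝ)/2 := by
            exact_mod_cast Nat.cast_div_le
        _ ≤ ((K:ℝ) + 1)/2 := by linarith
    calc (((n - m + 1)/2 : ℕ) : ℝ) * (p1 - p0) ≤ ((K:ℝ) + 1)/2 * (p1 - p0) :=
          mul_le_mul_of_nonneg_right a3 hq
      _ = (p1 - p0)/2 * ((K:ℝ) + 1) := by ring
  unfold IsEpsRepNash2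
  refine ⟨hσ1m, hσ2m, ?_, ?_⟩
  · -- row player deviations
    intro τ hτ
    have stage_le1 : ∀ h : List (A1 × A2),
        stagePay u τ σ2 h ≤ if h.length < m then v else p1 := by
      intro h
      by_cases hl : h.length < m
      · rw [if_pos hl]; unfold stagePay; rw [e2a h hl, sum_prod_factor]
        exact sum_mixed_le (hτ h) hμ₂v
      · rw [if_neg hl]
        by_cases hp : (h.length - m) % 2 = 0
        · unfold stagePay; rw [e2b h hl hp, sum_prod_factor]
          apply sum_mixed_le (hτ h)
          intro a1; rw [sum_pure_inner]; exact hstar a1 astar.2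
        · unfold stagePay; rw [e2c h hl hp, sum_prod_factor]
          apply sum_mixed_le (hτ h)
          intro a1; rw [sum_pure_inner]; exact hstar a1 adag.2
    have H1 := EP_le hτ hσ2m u (fun t => if t < m then v else p1)
      (fun h => stage_le1 h) n []
    simp only [List.length_nil, Nat.zero_add, zero_add] at H1
    have H2 := EP_eq hσ1m hσ2m u
      (fun t => if t < m then v else if (t - m) % 2 = 0 then p1 else p0)
      (fun h => stage_eq1 h) n []
    simp only [List.length_nil, Nat.zero_add, zero_add] at H2
    have step : (∑ i ∈ Finset.range n, (if i < m then v else p1))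
        ≤ (∑ i ∈ Finset.range n, (if i < m then v else if (i - m) % 2 = 0 then p1 else p0))
          + (p1 - p0)/2 * ((K:ℝ) + 1) := by linarith [hsum1, hcast1]
    calc avgPay2 n u τ σ2 = EP u τ σ2 [] n / n := avgPay2_eq_EP n u τ σ2
      _ ≤ (∑ i ∈ Finset.range n, (if i < m then v else p1)) / n := by
          apply div_le_div_of_nonneg_right H1 hnpos.le
      _ ≤ ((∑ i ∈ Finset.range n, (if i < m then v else if (i - m) % 2 = 0 then p1 else p0))
            + (p1 - p0)/2 * ((K:ℝ) + 1)) / n := by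
          apply div_le_div_of_nonneg_right step hnpos.le
      _ = avgPay2 n u σ1 σ2 + (p1 - p0)/2 * (((K:ℝ) + 1) / n) := by
          rw [avgPay2_eq_EP, H2, add_div, mul_div_assoc]
  · -- column player deviations
    intro τ hτ
    have stage_le2 : ∀ h : List (A1 × A2),
        stagePay u2 σ1 τ h ≤ if h.length < m then -v else -p0 := by
      intro h
      by_cases hl : h.length < m
      · rw [if_pos hl]; unfold stagePay; rw [e1a h hl, sum_prod_factor']
        apply sum_mixed_le (hτ h)
        intro b
        have hb : ∑ a1, μ₁ a1 * u2 a1 b = -∑ a1, μ₁ a1 * u a1 b := by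
          rw [hu2]; simp [mul_neg]
        rw [hb]; linarith [hμ₁v b]
      · rw [if_neg hl]
        by_cases hp : (h.length - m) % 2 = 0
        · unfold stagePay; rw [e1b h hl hp, sum_prod_factor']
          apply sum_mixed_le (hτ h)
          intro b; rw [sum_pure_inner]
          show u2 astar.1 b ≤ -p0
          rw [hu2]; exact neg_le_neg (hdag astar.1 b)
        · unfold stagePay; rw [e1c h hl hp, sum_prod_factor']
          apply sum_mixed_le (hτ h)
          intro b; rw [sum_pure_inner]
          show u2 adag.1 b ≤ -p0
          rw [hu2]; exact neg_le_neg (hdag adag.1 b)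
    have H1 := EP_le hσ1m hτ u2 (fun t => if t < m then -v else -p0)
      (fun h => stage_le2 h) n []
    simp only [List.length_nil, Nat.zero_add, zero_add] at H1
    have H2 := EP_eq hσ1m hσ2m u2
      (fun t => if t < m then -v else if (t - m) % 2 = 0 then -p1 else -p0)
      (fun h => stage_eq2 h) n []
    simp only [List.length_nil, Nat.zero_add, zero_add] at H2
    have step : (∑ i ∈ Finset.range n, (if i < m then -v else -p0))
        ≤ (∑ i ∈ Finset.range n, (if i < m then -v else if (i - m) % 2 = 0 then -p1 else -p0))
          + (p1 - p0)/2 * ((K:ℝ) + 1) := by linarith [hsum2, hcast2]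
    calc avgPay2 n u2 σ1 τ = EP u2 σ1 τ [] n / n := avgPay2_eq_EP n u2 σ1 τ
      _ ≤ (∑ i ∈ Finset.range n, (if i < m then -v else -p0)) / n := by
          apply div_le_div_of_nonneg_right H1 hnpos.le
      _ ≤ ((∑ i ∈ Finset.range n, (if i < m then -v else if (i - m) % 2 = 0 then -p1 else -p0))
            + (p1 - p0)/2 * ((K:ℝ) + 1)) / n := by
          apply div_le_div_of_nonneg_right step hnpos.le
      _ = avgPay2 n u2 σ1 σ2 + (p1 - p0)/2 * (((K:ℝ) + 1) / n) := by
          rw [avgPay2_eq_EP, H2, add_div, mul_div_assoc]
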